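/- arXiv:2209.04567 — 11 statements merged into one kernel-verified Lean document; each statement's English description precedes it below -/
import Mathlib

section
/- Every finite chordal graph G has clique cover number equal to its independence number, i.e., the minimum number of cliques needed to cover the vertex set of G equals the maximum size of a set of pairwise non-adjacent vertices of G. -/
/-- A clique cover of a simple graph: a finite family of cliques covering every vertex. -/
def SimpleGraph.IsCliqueCover {V : Type} (G : SimpleGraph V) (K : Finset (Finset V)) : Prop :=
  (∀ s ∈ K, G.IsClique (s : Set V)) ∧ ∀ v : V, ∃ s ∈ K, v ∈ s

/-- The clique cover number: minimum number of cliques in a clique cover. -/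
noncomputable def SimpleGraph.cliqueCoverNum {V : Type} (G : SimpleGraph V) : ℕ :=
  sInf {n | ∃ K : Finset (Finset V), G.IsCliqueCover K ∧ K.card = n}

/-- The closed neighborhood of a vertex. -/
def SimpleGraph.closedNbhd {V : Type} (G : SimpleGraph V) (v : V) : Set V :=
  {w | w = v ∨ G.Adj v w}

/-- A graph is chordal if every cycle of length at least four has a chord:
an edge of the graph joining two vertices of the cycle that is not an edge of the cycle. -/
def SimpleGraph.Chordal {V : Type} (G : SimpleGraph V) : Prop :=
  ∀ (v : V) (c : G.Walk v v), c.IsCycle → 4 ≤ c.length →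
    ∃ x y : V, G.Adj x y ∧ x ∈ c.support ∧ y ∈ c.support ∧ s(x, y) ∉ c.edges

/-- An independent set: a set of pairwise non-adjacent vertices. -/
def SimpleGraph.IsIndepSet' {V : Type} (G : SimpleGraph V) (s : Set V) : Prop :=
  s.Pairwise fun v w => ¬ G.Adj v w

/-- The independence number: the maximum size of an independent set. -/
noncomputable def SimpleGraph.indepNum' {V : Type} (G : SimpleGraph V) : ℕ :=
  sSup {n | ∃ s : Finset V, G.IsIndepSet' ↑s ∧ s.card = n}

open SimpleGraph
set_option linter.unusedSectionVars false
namespace ChordalProofAux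
variable {V : Type} [DecidableEq V] {G : SimpleGraph V}

lemma edge_mem_of_length_eq_one {u v : V} (p : G.Walk u v) (h : p.length = 1) :
    s(u, v) ∈ p.edges := by
  cases p with
  | nil => simp at h
  | cons hadj q =>
    cases q with
    | nil => simp
    | cons _ _ => simp [Walk.length_cons] at h

lemma two_le_length {u v : V} (p : G.Walk u v) (hne : u ≠ v) (he : s(u, v) ∉ p.edges) :
    2 ≤ p.length := by
  by_contra hlt
  push_neg at hlt
  interval_cases h : p.length
  · exact hne (p.eq_of_length_eq_zero h)
  · exact he (edge_mem_of_length_eq_one p h)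

lemma shortcut {x y u v : V} (W : G.Walk x y) (huv : G.Adj u v)
    (hu : u ∈ W.support) (hv : v ∈ W.support) (he : s(u, v) ∉ W.edges) :
    ∃ W' : G.Walk x y, W'.length < W.length ∧ ∀ w ∈ W'.support, w ∈ W.support := by
  by_cases hvd : v ∈ (W.dropUntil u hu).support
  · set T := W.takeUntil u hu with hT
    set D := W.dropUntil u hu with hD
    have hspec : T.append D = W := W.take_spec hu
    have hlen : W.length = T.length + D.length := by
      rw [← hspec, Walk.length_append]
    set seg := D.takeUntil v hvd with hseg
    set rest := D.dropUntil v hvd with hrest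
    have hDlen : D.length = seg.length + rest.length := by
      conv_lhs => rw [← D.take_spec hvd]
      rw [Walk.length_append]
    have hseg2 : 2 ≤ seg.length := by
      refine two_le_length seg huv.ne fun hmem => he ?_
      rw [← hspec, Walk.edges_append]
      exact List.mem_append_right _ (D.edges_takeUntil_subset hvd hmem)
    refine ⟨T.append (Walk.cons huv rest), ?_, ?_⟩
    · rw [Walk.length_append, Walk.length_cons, hlen, hDlen]
      omega
    · intro w hw
      rw [Walk.mem_support_append_iff] at hw
      rcases hw with hw | hw
      · exact W.support_takeUntil_subset hu hw
      · rw [Walk.support_cons, List.mem_cons] at hw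
        rcases hw with rfl | hw
        · exact hu
        · exact W.support_dropUntil_subset hu (D.support_dropUntil_subset hvd hw)
  · set T := W.takeUntil u hu with hT
    set D := W.dropUntil u hu with hD
    have hspec : T.append D = W := W.take_spec hu
    have hvT : v ∈ T.support := by
      rw [← hspec, Walk.mem_support_append_iff] at hv
      tauto
    have hlen : W.length = T.length + D.length := by
      rw [← hspec, Walk.length_append]
    set seg := T.dropUntil v hvT with hseg
    have hTlen : T.length = (T.takeUntil v hvT).length + seg.length := by
      conv_lhs => rw [← T.take_spec hvT]
      rw [Walk.length_append]
    have hseg2 : 2 ≤ seg.length := by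
      refine two_le_length seg (Ne.symm huv.ne) fun hmem => he ?_
      rw [Sym2.eq_swap]
      rw [← hspec, Walk.edges_append]
      exact List.mem_append_left _ (T.edges_dropUntil_subset hvT hmem)
    refine ⟨(T.takeUntil v hvT).append (Walk.cons huv.symm D), ?_, ?_⟩
    · rw [Walk.length_append, Walk.length_cons, hlen, hTlen]
      omega
    · intro w hw
      rw [Walk.mem_support_append_iff] at hw
      rcases hw with hw | hw
      · exact W.support_takeUntil_subset hu (T.support_takeUntil_subset hvT hw)
      · rw [Walk.support_cons, List.mem_cons] at hw
        rcases hw with rfl | hw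
        · exact hv
        · exact W.support_dropUntil_subset hu hw

lemma chordal_induce (hG : G.Chordal) (s : Set V) : (G.induce s).Chordal := by
  intro v c hc hl
  have f : G.induce s ↪g G := SimpleGraph.Embedding.induce s
  obtain ⟨x, y, hxy, hxs, hys, hne⟩ :=
    hG (f v) (c.map f.toHom) (hc.map f.injective) (by rwa [Walk.length_map])
  rw [Walk.support_map, List.mem_map] at hxs hys
  obtain ⟨x₀, hx₀, rfl⟩ := hxs
  obtain ⟨y₀, hy₀, rfl⟩ := hys
  refine ⟨x₀, y₀, ?_, hx₀, hy₀, ?_⟩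
  · exact f.map_rel_iff.mp (by exact hxy)
  · intro hmem
    apply hne
    rw [Walk.edges_map]
    exact List.mem_map_of_mem hmem

/-- reachability avoiding a separator set -/
def Reach (G : SimpleGraph V) (S : Finset V) (a w : V) : Prop :=
  ∃ p : G.Walk a w, ∀ v ∈ p.support, v ∉ S

lemma reach_self {S : Finset V} {a : V} (ha : a ∉ S) : Reach G S a a :=
  ⟨Walk.nil, by intro v hv; simp only [Walk.support_nil, List.mem_singleton] at hv; subst hv; exact ha⟩

lemma reach_not_mem {S : Finset V} {a w : V} (h : Reach G S a w) : w ∉ S := by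
  obtain ⟨p, hp⟩ := h
  exact hp w p.end_mem_support

lemma reach_adj {S : Finset V} {a w u : V} (h : Reach G S a w) (hadj : G.Adj w u)
    (hu : u ∉ S) : Reach G S a u := by
  obtain ⟨p, hp⟩ := h
  refine ⟨p.append (Walk.cons hadj Walk.nil), ?_⟩
  intro v hv
  rw [Walk.mem_support_append_iff] at hv
  rcases hv with hv | hv
  · exact hp v hv
  · simp only [Walk.support_cons, Walk.support_nil, List.mem_cons,
      List.not_mem_nil, or_false] at hv
    rcases hv with rfl | rfl
    · exact hp v p.end_mem_support
    · exact hu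

lemma not_reach_both {S : Finset V} {a b : V}
    (hsep : ∀ p : G.Walk a b, ∃ w ∈ p.support, w ∈ S) {w : V}
    (ha : Reach G S a w) (hb : Reach G S b w) : False := by
  obtain ⟨p, hp⟩ := ha
  obtain ⟨q, hq⟩ := hb
  obtain ⟨w', hw', hw'S⟩ := hsep (p.append q.reverse)
  rw [Walk.mem_support_append_iff] at hw'
  rcases hw' with hw' | hw'
  · exact hp w' hw' hw'S
  · rw [Walk.support_reverse, List.mem_reverse] at hw'
    exact hq w' hw' hw'S

lemma not_adj_reach {S : Finset V} {a b : V}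
    (hsep : ∀ p : G.Walk a b, ∃ w ∈ p.support, w ∈ S) {u w : V}
    (ha : Reach G S a u) (hb : Reach G S b w) : ¬ G.Adj u w := fun hadj =>
  not_reach_both hsep (reach_adj ha hadj (reach_not_mem hb)) hb

lemma prefix_avoid {S : Finset V} {a x : V} (q : G.Walk a x)
    (hq : ∀ v ∈ q.support, v ∉ S.erase x) (hcount : q.support.count x = 1) :
    ∀ w ∈ q.support, w ≠ x → Reach G S a w := by
  intro w hw hwx
  refine ⟨q.takeUntil w hw, ?_⟩
  have hxnot : x ∉ (q.takeUntil w hw).support := by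
    intro hx
    have h1 : x ∈ (q.dropUntil w hw).support := (q.dropUntil w hw).end_mem_support
    have hsplit : (q.takeUntil w hw).support ++ (q.dropUntil w hw).support.tail
        = q.support := by
      rw [← Walk.support_append, Walk.take_spec]
    have h2 : x ∈ (q.dropUntil w hw).support.tail := by
      rw [(q.dropUntil w hw).support_eq_cons, List.mem_cons] at h1
      rcases h1 with h1 | h1
      · exact absurd h1.symm hwx
      · exact h1
    have c1 : 0 < (q.takeUntil w hw).support.count x := List.count_pos_iff.mpr hx
    have c2 : 0 < (q.dropUntil w hw).support.tail.count x := List.count_pos_iff.mpr h2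
    have : q.support.count x = (q.takeUntil w hw).support.count x
        + (q.dropUntil w hw).support.tail.count x := by
      rw [← hsplit, List.count_append]
    omega
  intro v hv hvS
  have hvq : v ∈ q.support := q.support_takeUntil_subset hw hv
  exact hq v hvq (Finset.mem_erase.mpr ⟨fun h => hxnot (h ▸ hv), hvS⟩)

lemma sep_clique [Fintype V] (hG : G.Chordal) {a b : V} (hab : ¬ G.Adj a b) (hne : a ≠ b) :
    ∃ S : Finset V, a ∉ S ∧ b ∉ S ∧ (∀ p : G.Walk a b, ∃ w ∈ p.support, w ∈ S) ∧
      ∀ x ∈ S, ∀ y ∈ S, x ≠ y → G.Adj x y := by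
  classical
  set P : Finset V → Prop := fun T =>
    a ∉ T ∧ b ∉ T ∧ ∀ p : G.Walk a b, ∃ w ∈ p.support, w ∈ T with hPdef
  have hPex : P (Finset.univ \ {a, b}) := by
    refine ⟨by simp, by simp, ?_⟩
    intro p
    cases p with
    | nil => exact absurd rfl hne
    | @cons _ w _ h q =>
      refine ⟨w, by simp [q.start_mem_support], ?_⟩
      simp only [Finset.mem_sdiff, Finset.mem_univ, Finset.mem_insert, Finset.mem_singleton,
        true_and]
      push_neg
      exact ⟨fun hwa => G.irrefl (hwa ▸ h), fun hwb => hab (hwb ▸ h)⟩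
  have hne' : {k | ∃ T, P T ∧ T.card = k}.Nonempty := ⟨_, _, hPex, rfl⟩
  obtain ⟨S, hPS, hScard⟩ := Nat.sInf_mem hne'
  have hmin : ∀ z ∈ S, ¬ P (S.erase z) := by
    intro z hz hPe
    have h1 : sInf {k | ∃ T, P T ∧ T.card = k} ≤ (S.erase z).card :=
      Nat.sInf_le ⟨_, hPe, rfl⟩
    have h2 := Finset.card_erase_lt_of_mem hz
    omega
  obtain ⟨haS, hbS, hsepS⟩ := hPS
  refine ⟨S, haS, hbS, hsepS, ?_⟩
  intro x hxS y hyS hxy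
  by_contra hadj
  -- escape walks to each separator vertex, from both sides
  have escape : ∀ z ∈ S,
      (∃ q : G.Walk a z, (∀ v ∈ q.support, v ∉ S.erase z) ∧ q.support.count z = 1)
      ∧ (∃ q : G.Walk b z, (∀ v ∈ q.support, v ∉ S.erase z) ∧ q.support.count z = 1) := by
    intro z hz
    have h1 : ¬ (a ∉ S.erase z ∧ b ∉ S.erase z ∧
        ∀ p : G.Walk a b, ∃ w ∈ p.support, w ∈ S.erase z) := hmin z hz
    push_neg at h1
    obtain ⟨p, hp⟩ := h1 (fun h => haS (Finset.mem_of_mem_erase h))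
      (fun h => hbS (Finset.mem_of_mem_erase h))
    have hzp : z ∈ p.support := by
      obtain ⟨w, hw, hwS⟩ := hsepS p
      rcases eq_or_ne w z with rfl | hwz
      · exact hw
      · exact absurd (Finset.mem_erase.mpr ⟨hwz, hwS⟩) (hp w hw)
    constructor
    · exact ⟨p.takeUntil z hzp, fun v hv => hp v (p.support_takeUntil_subset hzp hv),
        p.count_support_takeUntil_eq_one hzp⟩
    · have hzp' : z ∈ p.reverse.support := by rwa [Walk.support_reverse, List.mem_reverse]
      refine ⟨p.reverse.takeUntil z hzp', fun v hv => ?_,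
        p.reverse.count_support_takeUntil_eq_one hzp'⟩
      have hmem := p.reverse.support_takeUntil_subset hzp' hv
      rw [Walk.support_reverse, List.mem_reverse] at hmem
      exact hp v hmem
  obtain ⟨⟨qax, hqax, hqaxc⟩, ⟨qbx, hqbx, hqbxc⟩⟩ := escape x hxS
  obtain ⟨⟨qay, hqay, hqayc⟩, ⟨qby, hqby, hqbyc⟩⟩ := escape y hyS
  -- Good walks on the a-side and b-side
  set GoodA : G.Walk x y → Prop := fun W =>
    ∀ w ∈ W.support, w = x ∨ w = y ∨ Reach G S a w with hGoodAdef
  set GoodB : G.Walk x y → Prop := fun W =>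
    ∀ w ∈ W.support, w = x ∨ w = y ∨ Reach G S b w with hGoodBdef
  have hW0A : GoodA (qax.reverse.append qay) := by
    intro w hw
    rw [Walk.mem_support_append_iff, Walk.support_reverse, List.mem_reverse] at hw
    rcases hw with hw | hw
    · rcases eq_or_ne w x with rfl | hwx
      · exact Or.inl rfl
      · exact Or.inr (Or.inr (prefix_avoid qax hqax hqaxc w hw hwx))
    · rcases eq_or_ne w y with rfl | hwy
      · exact Or.inr (Or.inl rfl)
      · exact Or.inr (Or.inr (prefix_avoid qay hqay hqayc w hw hwy))
  have hW0B : GoodB (qbx.reverse.append qby) := by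
    intro w hw
    rw [Walk.mem_support_append_iff, Walk.support_reverse, List.mem_reverse] at hw
    rcases hw with hw | hw
    · rcases eq_or_ne w x with rfl | hwx
      · exact Or.inl rfl
      · exact Or.inr (Or.inr (prefix_avoid qbx hqbx hqbxc w hw hwx))
    · rcases eq_or_ne w y with rfl | hwy
      · exact Or.inr (Or.inl rfl)
      · exact Or.inr (Or.inr (prefix_avoid qby hqby hqbyc w hw hwy))
  -- minimal good walks
  have hAne : {k | ∃ W : G.Walk x y, GoodA W ∧ W.length = k}.Nonempty := ⟨_, _, hW0A, rfl⟩
  have hBne : {k | ∃ W : G.Walk x y, GoodB W ∧ W.length = k}.Nonempty := ⟨_, _, hW0B, rfl⟩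
  set nA := sInf {k | ∃ W : G.Walk x y, GoodA W ∧ W.length = k} with hnAdef
  set nB := sInf {k | ∃ W : G.Walk x y, GoodB W ∧ W.length = k} with hnBdef
  obtain ⟨PA0, hPA0good, hPA0len⟩ := Nat.sInf_mem hAne
  obtain ⟨QB0, hQB0good, hQB0len⟩ := Nat.sInf_mem hBne
  have hminA : ∀ W : G.Walk x y, GoodA W → nA ≤ W.length :=
    fun W hW => Nat.sInf_le ⟨W, hW, rfl⟩
  have hminB : ∀ W : G.Walk x y, GoodB W → nB ≤ W.length :=
    fun W hW => Nat.sInf_le ⟨W, hW, rfl⟩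
  set PA := PA0.bypass with hPAdef
  set QB := QB0.bypass with hQBdef
  have hPAgood : GoodA PA := fun w hw => hPA0good w (PA0.support_bypass_subset hw)
  have hQBgood : GoodB QB := fun w hw => hQB0good w (QB0.support_bypass_subset hw)
  have hPAlen : PA.length = nA :=
    le_antisymm (by rw [hnAdef, ← hPA0len]; exact PA0.length_bypass_le) (hminA _ hPAgood)
  have hQBlen : QB.length = nB :=
    le_antisymm (by rw [hnBdef, ← hQB0len]; exact QB0.length_bypass_le) (hminB _ hQBgood)
  have hPApath : PA.IsPath := PA0.bypass_isPath
  have hQBpath : QB.IsPath := QB0.bypass_isPath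
  -- basic facts
  have notAx : ¬ Reach G S a x := fun h => reach_not_mem h hxS
  have notAy : ¬ Reach G S a y := fun h => reach_not_mem h hyS
  have hxyedgeA : s(x, y) ∉ PA.edges := fun h => hadj (PA.adj_of_mem_edges h)
  have hxyedgeB : s(x, y) ∉ QB.edges := fun h => hadj (QB.adj_of_mem_edges h)
  have h2A : 2 ≤ PA.length := two_le_length PA hxy hxyedgeA
  have h2B : 2 ≤ QB.length := two_le_length QB hxy hxyedgeB
  set C : G.Walk x x := PA.append QB.reverse with hCdef
  have hCsupp : ∀ w, w ∈ C.support ↔ w ∈ PA.support ∨ w ∈ QB.support := by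
    intro w
    rw [hCdef, Walk.mem_support_append_iff, Walk.support_reverse, List.mem_reverse]
  have hCedges : C.edges = PA.edges ++ QB.edges.reverse := by
    rw [hCdef, Walk.edges_append, Walk.edges_reverse]
  have hPAedgeC : ∀ e ∈ PA.edges, e ∈ C.edges := by
    intro e he; rw [hCedges]; exact List.mem_append_left _ he
  have hQBedgeC : ∀ e ∈ QB.edges, e ∈ C.edges := by
    intro e he; rw [hCedges]; exact List.mem_append_right _ (List.mem_reverse.mpr he)
  have inXY : ∀ w, w ∈ PA.support → w ∈ QB.support → w = x ∨ w = y := by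
    intro w hwP hwQ
    rcases hPAgood w hwP with rfl | rfl | hA
    · exact Or.inl rfl
    · exact Or.inr rfl
    · rcases hQBgood w hwQ with rfl | rfl | hB
      · exact absurd hA notAx
      · exact absurd hA notAy
      · exact (not_reach_both hsepS hA hB).elim
  have hCcycle : C.IsCycle := by
    rw [Walk.isCycle_def]
    refine ⟨⟨?_⟩, ?_, ?_⟩
    · -- edges nodup
      rw [hCedges]
      refine List.Nodup.append hPApath.isTrail.edges_nodup
        (List.nodup_reverse.mpr hQBpath.isTrail.edges_nodup) ?_
      intro e he1 he2
      rw [List.mem_reverse] at he2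
      induction e using Sym2.ind with
      | _ c d =>
        have hc1 := PA.fst_mem_support_of_mem_edges he1
        have hd1 := PA.snd_mem_support_of_mem_edges he1
        have hc2 := QB.fst_mem_support_of_mem_edges he2
        have hd2 := QB.snd_mem_support_of_mem_edges he2
        have hcd : c ≠ d := (PA.adj_of_mem_edges he1).ne
        rcases inXY c hc1 hc2 with rfl | rfl <;> rcases inXY d hd1 hd2 with rfl | rfl
        · exact hcd rfl
        · exact hxyedgeA he1
        · exact hxyedgeA (by rwa [Sym2.eq_swap] at he1)
        · exact hcd rfl
    · -- ne nil
      intro h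
      have h0 : C.length = 0 := by rw [h]; rfl
      rw [hCdef, Walk.length_append, Walk.length_reverse] at h0
      omega
    · -- support tail nodup
      have hs : C.support.tail = PA.support.tail ++ QB.reverse.support.tail := by
        conv_lhs => rw [hCdef, Walk.support_append, PA.support_eq_cons]
        rfl
      rw [hs]
      have hnd1 : PA.support.tail.Nodup :=
        (List.tail_sublist _).nodup hPApath.support_nodup
      have hnd2 : QB.reverse.support.tail.Nodup :=
        (List.tail_sublist _).nodup hQBpath.reverse.support_nodup
      refine List.Nodup.append hnd1 hnd2 ?_
      intro w hw1 hw2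
      have hxt : x ∉ PA.support.tail := by
        have hnodup := hPApath.support_nodup
        rw [PA.support_eq_cons] at hnodup
        exact (List.nodup_cons.mp hnodup).1
      have hyt : y ∉ QB.reverse.support.tail := by
        have hnodup := hQBpath.reverse.support_nodup
        rw [QB.reverse.support_eq_cons] at hnodup
        exact (List.nodup_cons.mp hnodup).1
      have hwP : w ∈ PA.support := List.mem_of_mem_tail hw1
      have hwQ : w ∈ QB.support := by
        have hmem := List.mem_of_mem_tail hw2
        rwa [Walk.support_reverse, List.mem_reverse] at hmem
      rcases inXY w hwP hwQ with rfl | rfl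
      · exact hxt hw1
      · exact hyt hw2
  have hClen : 4 ≤ C.length := by
    rw [hCdef, Walk.length_append, Walk.length_reverse]; omega
  obtain ⟨u, v, huv, huC, hvC, hech⟩ := hG x C hCcycle hClen
  have hshortA : ∀ u v : V, G.Adj u v → u ∈ PA.support → v ∈ PA.support →
      s(u, v) ∉ C.edges → False := by
    intro u v huv hu hv hech
    have hne2 : s(u, v) ∉ PA.edges := fun h => hech (hPAedgeC _ h)
    obtain ⟨W', hlt, hsub⟩ := shortcut PA huv hu hv hne2
    have hge : nA ≤ W'.length := hminA W' (fun w hw => hPAgood w (hsub w hw))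
    omega
  have hshortB : ∀ u v : V, G.Adj u v → u ∈ QB.support → v ∈ QB.support →
      s(u, v) ∉ C.edges → False := by
    intro u v huv hu hv hech
    have hne2 : s(u, v) ∉ QB.edges := fun h => hech (hQBedgeC _ h)
    obtain ⟨W', hlt, hsub⟩ := shortcut QB huv hu hv hne2
    have hge : nB ≤ W'.length := hminB W' (fun w hw => hQBgood w (hsub w hw))
    omega
  rcases (hCsupp u).mp huC with huP | huQ <;> rcases (hCsupp v).mp hvC with hvP | hvQ
  · exact hshortA u v huv huP hvP hech
  · by_cases hvP : v ∈ PA.support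
    · exact hshortA u v huv huP hvP hech
    by_cases huQ : u ∈ QB.support
    · exact hshortB u v huv huQ hvQ hech
    have hA : Reach G S a u := by
      rcases hPAgood u huP with rfl | rfl | h
      · exact absurd QB.start_mem_support huQ
      · exact absurd QB.end_mem_support huQ
      · exact h
    have hB : Reach G S b v := by
      rcases hQBgood v hvQ with rfl | rfl | h
      · exact absurd PA.start_mem_support hvP
      · exact absurd PA.end_mem_support hvP
      · exact h
    exact not_adj_reach hsepS hA hB huv
  · by_cases huP : u ∈ PA.support
    · exact hshortA u v huv huP hvP hech
    by_cases hvQ : v ∈ QB.support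
    · exact hshortB u v huv huQ hvQ hech
    have hA : Reach G S a v := by
      rcases hPAgood v hvP with rfl | rfl | h
      · exact absurd QB.start_mem_support hvQ
      · exact absurd QB.end_mem_support hvQ
      · exact h
    have hB : Reach G S b u := by
      rcases hQBgood u huQ with rfl | rfl | h
      · exact absurd PA.start_mem_support huP
      · exact absurd PA.end_mem_support huP
      · exact h
    exact not_adj_reach hsepS hA hB huv.symm
  · exact hshortB u v huv huQ hvQ hech

/-- A simplicial vertex: its neighborhood is a clique. -/
def Simp (G : SimpleGraph V) (v : V) : Prop :=
  ∀ ⦃x y : V⦄, G.Adj v x → G.Adj v y → x ≠ y → G.Adj x y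

lemma key : ∀ (n : ℕ) {V : Type} [Fintype V] [DecidableEq V] (G : SimpleGraph V),
    Fintype.card V ≤ n → G.Chordal → ∀ a b : V, ¬G.Adj a b → a ≠ b →
    ∃ u v : V, Simp G u ∧ Simp G v ∧ u ≠ v ∧ ¬G.Adj u v := by
  intro n
  induction n with
  | zero =>
    intro V _ _ G hcard _ a _ _ _
    exact absurd (Fintype.card_pos_iff.mpr ⟨a⟩) (by omega)
  | succ n ih =>
    intro V _ _ G hcard hG a b hab hne
    classical
    obtain ⟨S, haS, hbS, hsepS, hcliqueS⟩ := sep_clique hG hab hne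
    have side : ∀ c d : V, c ∉ S → d ∉ S →
        (∀ p : G.Walk c d, ∃ w ∈ p.support, w ∈ S) →
        ∃ u : V, Reach G S c u ∧ Simp G u := by
      intro c d hcS hdS hsep
      set T : Set V := {w | Reach G S c w} ∪ ↑S with hTdef
      have hdT : d ∉ T := by
        rintro (hd | hd)
        · obtain ⟨p, hp⟩ := hd
          obtain ⟨w, hw, hwS⟩ := hsep p
          exact hp w hw hwS
        · exact hdS hd
      haveI : Fintype ↥T := Fintype.ofFinite _
      have hcard2 : Fintype.card ↥T < Fintype.card V := by
        apply Fintype.card_lt_of_injective_of_notMem Subtype.val Subtype.val_injective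
          (b := d)
        rintro ⟨w, rfl⟩
        exact hdT w.2
      have hGT : (G.induce T).Chordal := chordal_induce hG T
      have hsimpT : ∃ u : ↥T, Reach G S c (u : V) ∧ Simp (G.induce T) u := by
        by_cases hcomp : ∀ p q : ↥T, p ≠ q → (G.induce T).Adj p q
        · exact ⟨⟨c, Or.inl (reach_self hcS)⟩, reach_self hcS,
            fun p q hp hq hpq => hcomp p q hpq⟩
        · push_neg at hcomp
          obtain ⟨p, q, hpq, hnadj⟩ := hcomp
          obtain ⟨u, v, hu, hv, huv, hnadj'⟩ := ih (G.induce T) (by omega) hGT p q hnadj hpq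
          have hval : ∀ w : ↥T, Reach G S c (w : V) ∨ (w : V) ∈ S := fun w => w.2
          rcases hval u with huR | huS
          · exact ⟨u, huR, hu⟩
          · rcases hval v with hvR | hvS
            · exact ⟨v, hvR, hv⟩
            · exfalso
              apply hnadj'
              have hne2 : (u : V) ≠ (v : V) := fun h => huv (Subtype.ext h)
              have hadj := hcliqueS _ huS _ hvS hne2
              exact hadj
      obtain ⟨u, huR, husimp⟩ := hsimpT
      refine ⟨u, huR, ?_⟩
      intro z w hz hw hzw
      have hzT : z ∈ T := by
        by_cases hzS : z ∈ S
        · exact Or.inr hzS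
        · exact Or.inl (reach_adj huR hz hzS)
      have hwT : w ∈ T := by
        by_cases hwS : w ∈ S
        · exact Or.inr hwS
        · exact Or.inl (reach_adj huR hw hwS)
      exact husimp (x := ⟨z, hzT⟩) (y := ⟨w, hwT⟩) hz hw
        (fun h => hzw (congrArg Subtype.val h))
    obtain ⟨u, huR, hus⟩ := side a b haS hbS hsepS
    have hsepS' : ∀ p : G.Walk b a, ∃ w ∈ p.support, w ∈ S := by
      intro p
      obtain ⟨w, hw, hwS⟩ := hsepS p.reverse
      rw [Walk.support_reverse, List.mem_reverse] at hw
      exact ⟨w, hw, hwS⟩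
    obtain ⟨v, hvR, hvs⟩ := side b a hbS haS hsepS'
    refine ⟨u, v, hus, hvs, ?_, ?_⟩
    · intro h
      exact not_reach_both hsepS huR (h ▸ hvR)
    · exact not_adj_reach hsepS huR hvR

lemma exists_simp {V : Type} [Fintype V] [DecidableEq V] [Nonempty V] (G : SimpleGraph V)
    (hG : G.Chordal) : ∃ v, Simp G v := by
  by_cases h : ∀ x y : V, x ≠ y → G.Adj x y
  · exact ⟨Classical.arbitrary V, fun x y _ _ hxy => h x y hxy⟩
  · push_neg at h
    obtain ⟨a, b, hne, hnadj⟩ := h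
    obtain ⟨u, _, hu, _⟩ := key (Fintype.card V) G le_rfl hG a b hnadj hne
    exact ⟨u, hu⟩

lemma cover_exists {V : Type} [Fintype V] [DecidableEq V] (G : SimpleGraph V) :
    G.IsCliqueCover (Finset.univ.image fun v => ({v} : Finset V)) := by
  constructor
  · intro t ht
    simp only [Finset.mem_image] at ht
    obtain ⟨v, _, rfl⟩ := ht
    simp [SimpleGraph.IsClique, Finset.coe_singleton, Set.pairwise_singleton]
  · intro v
    exact ⟨{v}, by simp, by simp⟩

lemma cover_card_nonempty {V : Type} [Fintype V] [DecidableEq V] (G : SimpleGraph V) :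
    {n | ∃ K : Finset (Finset V), G.IsCliqueCover K ∧ K.card = n}.Nonempty :=
  ⟨_, _, cover_exists G, rfl⟩

lemma indep_card_nonempty {V : Type} (G : SimpleGraph V) :
    {n | ∃ s : Finset V, G.IsIndepSet' ↑s ∧ s.card = n}.Nonempty :=
  ⟨0, ∅, by simp [SimpleGraph.IsIndepSet'], Finset.card_empty⟩

lemma indep_card_bdd {V : Type} [Fintype V] (G : SimpleGraph V) :
    BddAbove {n | ∃ s : Finset V, G.IsIndepSet' ↑s ∧ s.card = n} :=
  ⟨Fintype.card V, by rintro k ⟨s, _, rfl⟩; exact s.card_le_univ⟩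

lemma cover_ge_indep {V : Type} [Fintype V] [DecidableEq V] {G : SimpleGraph V}
    {K : Finset (Finset V)} (hK : G.IsCliqueCover K) {s : Finset V}
    (hs : G.IsIndepSet' ↑s) : s.card ≤ K.card := by
  classical
  choose f hfK hfmem using hK.2
  apply Finset.card_le_card_of_injOn f (fun v _ => hfK v)
  intro v hv w hw hfvw
  by_contra hvw
  have hadj : G.Adj v w := by
    refine hK.1 (f v) (hfK v) (Finset.mem_coe.mpr (hfmem v)) ?_ hvw
    rw [Finset.mem_coe, hfvw]
    exact hfmem w
  exact hs (Finset.mem_coe.mpr hv) (Finset.mem_coe.mpr hw) hvw hadj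

lemma cover_le_indep : ∀ (n : ℕ) {V : Type} [Fintype V] [DecidableEq V] (G : SimpleGraph V),
    Fintype.card V ≤ n → G.Chordal → G.cliqueCoverNum ≤ G.indepNum' := by
  intro n
  induction n with
  | zero =>
    intro V _ _ G hcard _
    have hcov : G.IsCliqueCover (∅ : Finset (Finset V)) :=
      ⟨by simp, fun v => absurd (Fintype.card_pos_iff.mpr ⟨v⟩) (by omega)⟩
    have h0 : G.cliqueCoverNum ≤ 0 := Nat.sInf_le ⟨∅, hcov, rfl⟩
    exact le_trans h0 (Nat.zero_le _)
  | succ n ih =>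
    intro V _ _ G hcard hG
    classical
    cases isEmpty_or_nonempty V with
    | inl hV =>
      have hcov : G.IsCliqueCover (∅ : Finset (Finset V)) :=
        ⟨by simp, fun v => (hV.false v).elim⟩
      have h0 : G.cliqueCoverNum ≤ 0 := Nat.sInf_le ⟨∅, hcov, rfl⟩
      exact le_trans h0 (Nat.zero_le _)
    | inr hV =>
      obtain ⟨v, hv⟩ := exists_simp G hG
      set T : Set V := (G.closedNbhd v)ᶜ with hTdef
      haveI : Fintype ↥T := Fintype.ofFinite _
      have hvT : v ∉ T := fun h => h (Or.inl rfl)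
      have hcard2 : Fintype.card ↥T < Fintype.card V := by
        apply Fintype.card_lt_of_injective_of_notMem Subtype.val Subtype.val_injective
          (b := v)
        rintro ⟨w, hw⟩
        exact hvT (hw ▸ w.2)
      have hGT := chordal_induce hG T
      have h1 : (G.induce T).cliqueCoverNum ≤ (G.induce T).indepNum' := ih _ (by omega) hGT
      obtain ⟨K', hK', hK'card⟩ := Nat.sInf_mem (cover_card_nonempty (G.induce T))
      obtain ⟨CN, hCNdef⟩ : ∃ CN : Finset V,
          CN = Finset.univ.filter (fun w => w ∈ G.closedNbhd v) := ⟨_, rfl⟩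
      obtain ⟨K, hKdef⟩ : ∃ K : Finset (Finset V),
          K = insert CN (K'.image (Finset.image Subtype.val)) := ⟨_, rfl⟩
      have hKcov : G.IsCliqueCover K := by
        constructor
        · intro t ht
          rw [hKdef, Finset.mem_insert] at ht
          rcases ht with rfl | ht
          · intro z hz w hw hzw
            rw [Finset.mem_coe, hCNdef, Finset.mem_filter] at hz hw
            rcases hz.2 with rfl | hz2
            · rcases hw.2 with rfl | hw2
              · exact absurd rfl hzw
              · exact hw2
            · rcases hw.2 with rfl | hw2
              · exact hz2.symm
              · exact hv hz2 hw2 hzw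
          · rw [Finset.mem_image] at ht
            obtain ⟨t', ht', rfl⟩ := ht
            intro z hz w hw hzw
            rw [Finset.mem_coe, Finset.mem_image] at hz hw
            obtain ⟨z₀, hz₀, rfl⟩ := hz
            obtain ⟨w₀, hw₀, rfl⟩ := hw
            exact hK'.1 t' ht' (Finset.mem_coe.mpr hz₀) (Finset.mem_coe.mpr hw₀)
              (fun h => hzw (congrArg Subtype.val h))
        · intro w
          by_cases hw : w ∈ G.closedNbhd v
          · exact ⟨CN, by rw [hKdef]; exact Finset.mem_insert_self _ _,
              by rw [hCNdef, Finset.mem_filter]; exact ⟨Finset.mem_univ _, hw⟩⟩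
          · obtain ⟨t', ht', hmem⟩ := hK'.2 ⟨w, hw⟩
            refine ⟨t'.image Subtype.val, ?_, ?_⟩
            · rw [hKdef]
              exact Finset.mem_insert_of_mem (Finset.mem_image_of_mem _ ht')
            · exact Finset.mem_image_of_mem _ hmem
      have hKcard : K.card ≤ K'.card + 1 := by
        rw [hKdef]
        refine le_trans (Finset.card_insert_le _ _) ?_
        have := Finset.card_image_le (s := K') (f := Finset.image Subtype.val)
        omega
      have h3 : G.cliqueCoverNum ≤ K.card := Nat.sInf_le ⟨K, hKcov, rfl⟩
      -- independence number bump
      obtain ⟨s', hs', hs'card⟩ :=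
        Nat.sSup_mem (indep_card_nonempty (G.induce T)) (indep_card_bdd (G.induce T))
      have hvimg : v ∉ s'.image Subtype.val := by
        rw [Finset.mem_image]
        rintro ⟨w, _, hw⟩
        exact hvT (hw ▸ w.2)
      have hindep : G.IsIndepSet' ↑(insert v (s'.image Subtype.val)) := by
        intro z hz w hw hzw
        rw [Finset.coe_insert, Set.mem_insert_iff, Finset.mem_coe] at hz hw
        have himgT : ∀ u : V, u ∈ s'.image Subtype.val → u ∈ T := by
          intro u hu
          rw [Finset.mem_image] at hu
          obtain ⟨u₀, _, rfl⟩ := hu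
          exact u₀.2
        rcases hz with rfl | hz
        · rcases hw with rfl | hw
          · exact absurd rfl hzw
          · intro hadj
            exact (himgT w hw) (Or.inr hadj)
        · rcases hw with rfl | hw
          · intro hadj
            exact (himgT z hz) (Or.inr hadj.symm)
          · rw [Finset.mem_image] at hz hw
            obtain ⟨z₀, hz₀, rfl⟩ := hz
            obtain ⟨w₀, hw₀, rfl⟩ := hw
            intro hadj
            exact hs' (Finset.mem_coe.mpr hz₀) (Finset.mem_coe.mpr hw₀)
              (fun h => hzw (congrArg Subtype.val h)) hadj
      have hcardins : (insert v (s'.image Subtype.val)).card = s'.card + 1 := by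
        rw [Finset.card_insert_of_notMem hvimg,
          Finset.card_image_of_injective _ Subtype.val_injective]
      have h2 : s'.card + 1 ≤ G.indepNum' := by
        rw [← hcardins]
        exact le_csSup (indep_card_bdd G) ⟨_, hindep, rfl⟩
      have hid2 : (G.induce T).indepNum'
          = sSup {n | ∃ s : Finset ↥T, (G.induce T).IsIndepSet' ↑s ∧ s.card = n} :=
        rfl
      have hid : (G.induce T).cliqueCoverNum
          = sInf {n | ∃ K : Finset (Finset ↥T), (G.induce T).IsCliqueCover K ∧ K.card = n} :=
        rfl
      omega

end ChordalProofAux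

/-- Every finite chordal graph has clique cover number equal to its independence number. -/
theorem cliqueCoverNum_eq_indepNum_of_chordal {V : Type} [Fintype V]
    (G : SimpleGraph V) (hG : G.Chordal) :
    G.cliqueCoverNum = G.indepNum' := by
  classical
  apply le_antisymm
  · exact ChordalProofAux.cover_le_indep (Fintype.card V) G le_rfl hG
  · obtain ⟨K, hK, hKcard⟩ := Nat.sInf_mem (ChordalProofAux.cover_card_nonempty G)
    apply csSup_le (ChordalProofAux.indep_card_nonempty G)
    rintro k ⟨s, hs, rfl⟩
    calc s.card ≤ K.card := ChordalProofAux.cover_ge_indep hK hs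
    _ = G.cliqueCoverNum := hKcard
end

section
/- Let G be a finite simple graph and let Z be a finite collection of pairs (U_i, {a_i, b_i}) where U_i is a set of vertices of G and a_i, b_i are vertices that are equal or adjacent in G and satisfy N[a_i] ⊆ N[b_i] or N[b_i] ⊆ N[a_i]. Then for every clique cover K of G there exists a clique cover M of G with |M| ≤ |K| such that for every i some clique of M contains both a_i and b_i; in particular, M satisfies all zipper constraints in Z. -/
lemma repair_step {V : Type} [DecidableEq V] (G : SimpleGraph V) (a b : V)
    (h : G.closedNbhd a ⊆ G.closedNbhd b) (M : Finset (Finset V))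
    (hM : G.IsCliqueCover M) :
    ∃ M' : Finset (Finset V), G.IsCliqueCover M' ∧ M'.card ≤ M.card ∧
      (∃ s ∈ M', a ∈ s ∧ b ∈ s) ∧
      ∀ x y : V, (∃ s ∈ M, x ∈ s ∧ y ∈ s) → ∃ s ∈ M', x ∈ s ∧ y ∈ s := by
  obtain ⟨t, htM, hat⟩ := hM.2 a
  have hclt : G.IsClique (t : Set V) := hM.1 t htM
  refine ⟨insert (insert b t) (M.erase t), ⟨?_, ?_⟩, ?_, ?_, ?_⟩
  · intro s hs
    rcases Finset.mem_insert.1 hs with rfl | hs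
    · rw [Finset.coe_insert]
      refine hclt.insert ?_
      intro w hw hwb
      have hwNa : w ∈ G.closedNbhd a := by
        by_cases hwa : w = a
        · exact Or.inl hwa
        · exact Or.inr ((hclt hat hw (fun e => hwa e.symm)))
      rcases h hwNa with rfl | hadj
      · exact absurd rfl hwb
      · exact hadj
    · exact hM.1 s (Finset.mem_of_mem_erase hs)
  · intro v
    obtain ⟨s, hsM, hvs⟩ := hM.2 v
    by_cases hst : s = t
    · exact ⟨insert b t, Finset.mem_insert_self _ _, Finset.mem_insert_of_mem (hst ▸ hvs)⟩
    · exact ⟨s, Finset.mem_insert_of_mem (Finset.mem_erase.2 ⟨hst, hsM⟩), hvs⟩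
  · calc (insert (insert b t) (M.erase t)).card ≤ (M.erase t).card + 1 :=
          Finset.card_insert_le _ _
      _ ≤ M.card := by
          have := Finset.card_pos.2 ⟨t, htM⟩
          rw [Finset.card_erase_of_mem htM]
          omega
  · exact ⟨insert b t, Finset.mem_insert_self _ _,
      Finset.mem_insert_of_mem hat, Finset.mem_insert_self _ _⟩
  · rintro x y ⟨s, hsM, hxs, hys⟩
    by_cases hst : s = t
    · subst hst
      exact ⟨insert b s, Finset.mem_insert_self _ _,
        Finset.mem_insert_of_mem hxs, Finset.mem_insert_of_mem hys⟩
    · exact ⟨s, Finset.mem_insert_of_mem (Finset.mem_erase.2 ⟨hst, hsM⟩), hxs, hys⟩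

/-- Repairing zipper constraints: if every zipper-constraint target is a pair of
equal-or-adjacent vertices with comparable closed neighborhoods, then any clique cover `K`
can be turned into a clique cover `M` with `|M| ≤ |K|` in which, for every constraint,
some clique contains both target vertices; in particular `M` satisfies all the zipper
constraints. -/
theorem cliqueCover_repair {V : Type} [Fintype V] [DecidableEq V] (G : SimpleGraph V)
    {ι : Type} [Finite ι] (U : ι → Set V) (a b : ι → V)
    (hab : ∀ i : ι, a i = b i ∨ G.Adj (a i) (b i))
    (hnbhd : ∀ i : ι, G.closedNbhd (a i) ⊆ G.closedNbhd (b i) ∨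
      G.closedNbhd (b i) ⊆ G.closedNbhd (a i)) :
    ∀ K : Finset (Finset V), G.IsCliqueCover K →
      ∃ M : Finset (Finset V), G.IsCliqueCover M ∧ M.card ≤ K.card ∧
        (∀ i : ι, ∃ s ∈ M, a i ∈ s ∧ b i ∈ s) ∧
        (∀ i : ι, (∃ s ∈ M, U i ⊆ ↑s) → ∃ s ∈ M, a i ∈ s ∧ b i ∈ s) := by
  classical
  have := Fintype.ofFinite ι
  intro K hK
  suffices h : ∀ F : Finset ι, ∃ M : Finset (Finset V), G.IsCliqueCover M ∧ M.card ≤ K.card ∧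
      ∀ i ∈ F, ∃ s ∈ M, a i ∈ s ∧ b i ∈ s by
    obtain ⟨M, hM, hcard, hall⟩ := h Finset.univ
    exact ⟨M, hM, hcard, fun i => hall i (Finset.mem_univ i),
      fun i _ => hall i (Finset.mem_univ i)⟩
  intro F
  induction F using Finset.induction_on with
  | empty => exact ⟨K, hK, le_rfl, fun i hi => absurd hi (Finset.notMem_empty i)⟩
  | @insert j F hjF ih =>
    obtain ⟨M, hM, hcard, hall⟩ := ih
    rcases hnbhd j with hsub | hsub
    · obtain ⟨M', hM', hcard', hj, hpres⟩ := repair_step G (a j) (b j) hsub M hM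
      refine ⟨M', hM', hcard'.trans hcard, ?_⟩
      intro i hi
      rcases Finset.mem_insert.1 hi with rfl | hi
      · exact hj
      · obtain ⟨s, hs, has, hbs⟩ := hall i hi
        exact hpres _ _ ⟨s, hs, has, hbs⟩
    · obtain ⟨M', hM', hcard', hj, hpres⟩ := repair_step G (b j) (a j) hsub M hM
      refine ⟨M', hM', hcard'.trans hcard, ?_⟩
      intro i hi
      rcases Finset.mem_insert.1 hi with rfl | hi
      · obtain ⟨s, hs, hbs, has⟩ := hj
        exact ⟨s, hs, has, hbs⟩
      · obtain ⟨s, hs, has, hbs⟩ := hall i hi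
        exact hpres _ _ ⟨s, hs, has, hbs⟩
end

section
/- Let G be a finite simple graph and let Z be a finite collection of pairs (U_i, {a_i, b_i}) where U_i is a set of vertices of G and a_i, b_i are vertices that are equal or adjacent in G and satisfy N[a_i] ⊆ N[b_i] or N[b_i] ⊆ N[a_i]. Then the minimum size of a clique cover of G that satisfies all zipper constraints in Z equals the clique cover number of G (i.e., the zipper constraints cost nothing). -/
/-- If every zipper-constraint target is a pair of equal-or-adjacent vertices with
comparable closed neighborhoods, then the minimum size of a clique cover satisfying all
the zipper constraints equals the (unconstrained) clique cover number. -/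
theorem zippedCliqueCoverNum_eq_cliqueCoverNum {V : Type} [Fintype V] [DecidableEq V]
    (G : SimpleGraph V) {ι : Type} [Finite ι] (U : ι → Set V) (a b : ι → V)
    (hab : ∀ i : ι, a i = b i ∨ G.Adj (a i) (b i))
    (hnbhd : ∀ i : ι, G.closedNbhd (a i) ⊆ G.closedNbhd (b i) ∨
      G.closedNbhd (b i) ⊆ G.closedNbhd (a i)) :
    sInf {n | ∃ K : Finset (Finset V), G.IsCliqueCover K ∧
        (∀ i : ι, (∃ s ∈ K, U i ⊆ ↑s) → ∃ s ∈ K, a i ∈ s ∧ b i ∈ s) ∧ K.card = n} =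
      G.cliqueCoverNum := by
  classical
  haveI : Fintype ι := Fintype.ofFinite ι
  set d : ι → V := fun i =>
    if G.closedNbhd (a i) ⊆ G.closedNbhd (b i) then a i else b i with hd
  set e : ι → V := fun i =>
    if G.closedNbhd (a i) ⊆ G.closedNbhd (b i) then b i else a i with he
  have hde : ∀ i, G.closedNbhd (d i) ⊆ G.closedNbhd (e i) := by
    intro i
    by_cases h : G.closedNbhd (a i) ⊆ G.closedNbhd (b i)
    · simp only [hd, he, if_pos h]; exact h
    · simp only [hd, he, if_neg h]; exact (hnbhd i).resolve_left h
  have hpair : ∀ i, (d i = a i ∧ e i = b i) ∨ (d i = b i ∧ e i = a i) := by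
    intro i
    by_cases h : G.closedNbhd (a i) ⊆ G.closedNbhd (b i)
    · left; simp [hd, he, h]
    · right; simp [hd, he, h]
  -- the closure operation
  set F : Finset V → Finset V := fun s =>
    s ∪ (Finset.univ.filter (fun i => d i ∈ s)).image e with hF
  have hmemF : ∀ s (x : V), x ∈ F s ↔ x ∈ s ∨ ∃ i, d i ∈ s ∧ e i = x := by
    intro s x
    simp [hF, Finset.mem_union, Finset.mem_image, Finset.mem_filter]
  have hFclique : ∀ s : Finset V, G.IsClique (s : Set V) → G.IsClique ((F s : Finset V) : Set V) := by
    intro s hs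
    have claim1 : ∀ x ∈ F s, ∀ w ∈ s, w ∈ G.closedNbhd x := by
      intro x hx w hw
      rcases (hmemF s x).1 hx with hxs | ⟨i, hdi, hei⟩
      · rcases eq_or_ne w x with rfl | hne
        · exact Or.inl rfl
        · exact Or.inr (hs hxs hw (Ne.symm hne))
      · have hw' : w ∈ G.closedNbhd (d i) := by
          rcases eq_or_ne w (d i) with rfl | hne
          · exact Or.inl rfl
          · exact Or.inr ((hs hdi hw (Ne.symm hne)))
        subst hei
        exact hde i hw'
    intro x hx y hy hxy
    rcases (hmemF s y).1 hy with hys | ⟨j, hdj, hej⟩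
    · rcases claim1 x hx y hys with h | h
      · exact absurd h.symm hxy
      · exact h
    · have hx' : x ∈ G.closedNbhd (d j) := by
        rcases claim1 x hx (d j) hdj with h | h
        · exact Or.inl h.symm
        · exact Or.inr h.symm
      have := hde j hx'
      subst hej
      rcases this with h | h
      · exact absurd h hxy
      · exact h.symm
  -- from any cover, build a constrained cover of no larger size
  have hbuild : ∀ K : Finset (Finset V), G.IsCliqueCover K →
      ∃ K' : Finset (Finset V), G.IsCliqueCover K' ∧
        (∀ i : ι, ∃ s ∈ K', a i ∈ s ∧ b i ∈ s) ∧ K'.card ≤ K.card := by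
    intro K hK
    refine ⟨K.image F, ⟨?_, ?_⟩, ?_, Finset.card_image_le⟩
    · intro s hs
      rcases Finset.mem_image.1 hs with ⟨t, ht, rfl⟩
      exact hFclique t (hK.1 t ht)
    · intro v
      rcases hK.2 v with ⟨s, hsK, hvs⟩
      exact ⟨F s, Finset.mem_image_of_mem F hsK,
        (hmemF s v).2 (Or.inl hvs)⟩
    · intro i
      rcases hK.2 (d i) with ⟨s, hsK, hds⟩
      refine ⟨F s, Finset.mem_image_of_mem F hsK, ?_⟩
      have hdF : d i ∈ F s := (hmemF s (d i)).2 (Or.inl hds)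
      have heF : e i ∈ F s := (hmemF s (e i)).2 (Or.inr ⟨i, hds, rfl⟩)
      rcases hpair i with ⟨h1, h2⟩ | ⟨h1, h2⟩
      · exact ⟨h1 ▸ hdF, h2 ▸ heF⟩
      · exact ⟨h2 ▸ heF, h1 ▸ hdF⟩
  -- a trivial cover exists
  have hcov0 : G.IsCliqueCover (Finset.univ.image (fun v : V => ({v} : Finset V))) := by
    constructor
    · intro s hs
      rcases Finset.mem_image.1 hs with ⟨v, _, rfl⟩
      simp [SimpleGraph.isClique_singleton]
    · intro v
      exact ⟨{v}, Finset.mem_image_of_mem _ (Finset.mem_univ v), Finset.mem_singleton_self v⟩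
  set S1 : Set ℕ := {n | ∃ K : Finset (Finset V), G.IsCliqueCover K ∧
      (∀ i : ι, (∃ s ∈ K, U i ⊆ ↑s) → ∃ s ∈ K, a i ∈ s ∧ b i ∈ s) ∧ K.card = n} with hS1
  set S2 : Set ℕ := {n | ∃ K : Finset (Finset V), G.IsCliqueCover K ∧ K.card = n} with hS2
  have hsub : S1 ⊆ S2 := by
    rintro n ⟨K, hK, _, hcard⟩
    exact ⟨K, hK, hcard⟩
  have hS2ne : S2.Nonempty := ⟨_, _, hcov0, rfl⟩
  have h1 : sInf S1 ≤ sInf S2 := by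
    obtain ⟨K, hK, hcard⟩ := Nat.sInf_mem hS2ne
    obtain ⟨K', hK', hcon, hle⟩ := hbuild K hK
    calc sInf S1 ≤ K'.card := Nat.sInf_le ⟨K', hK', fun i _ => hcon i, rfl⟩
      _ ≤ K.card := hle
      _ = sInf S2 := hcard
  have hS1ne : S1.Nonempty := by
    obtain ⟨K', hK', hcon, _⟩ := hbuild _ hcov0
    exact ⟨K'.card, K', hK', fun i _ => hcon i, rfl⟩
  have h2 : sInf S2 ≤ sInf S1 := Nat.sInf_le (hsub (Nat.sInf_mem hS1ne))
  exact le_antisymm h1 h2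
end

section
/- A finite simple graph G is isomorphic to the compatibility graph G_F of some deterministic filter F if and only if G either has at least two connected components or is a complete graph. -/
/-- A deterministic (combinatorial) filter: states `S`, observations `Y`, outputs `C`,
an initial state, a partial transition function and an output function. -/
structure DFilter (S Y C : Type) where
  init : S
  tr : S → Y → Option S
  out : S → C

namespace DFilter

variable {S Y C : Type}

/-- Trace an observation sequence from a state (`none` if it crashes). -/
def run (F : DFilter S Y C) : S → List Y → Option S
  | v, [] => some v
  | v, y :: ys => (F.tr v y).bind fun w => F.run w ys

/-- The extensions of a state: observation sequences traceable from it. -/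
def Ext (F : DFilter S Y C) (v : S) : Set (List Y) :=
  {s | (F.run v s).isSome}

/-- The output sequence produced by tracing an observation sequence from a state,
reading the output at every visited state (starting with the output of the state itself). -/
def outs (F : DFilter S Y C) : S → List Y → Option (List C)
  | v, [] => some [F.out v]
  | v, y :: ys => (F.tr v y).bind fun w => (F.outs w ys).map (F.out v :: ·)

/-- Two states are compatible when the outputs they produce agree on all common extensions. -/
def Compatible (F : DFilter S Y C) (v w : S) : Prop :=
  ∀ s : List Y, s ∈ F.Ext v → s ∈ F.Ext w → F.outs v s = F.outs w s

/-- The compatibility graph: edges join distinct compatible states. -/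
def compatGraph (F : DFilter S Y C) : SimpleGraph S where
  Adj v w := v ≠ w ∧ F.Compatible v w
  symm := by
    constructor
    rintro v w ⟨hne, hc⟩
    exact ⟨hne.symm, fun s hw hv => (hc s hv hw).symm⟩
  loopless := ⟨fun v h => h.1 rfl⟩

/-- A filter is globally language comparable (GLC) when the extension sets of any two
compatible states are comparable under inclusion. -/
def GLC (F : DFilter S Y C) : Prop :=
  ∀ v w : S, F.Compatible v w → F.Ext v ⊆ F.Ext w ∨ F.Ext w ⊆ F.Ext v

/-- A filter is neighborhood comparable (NC) when any two vertices of its compatibility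
graph with intersecting closed neighborhoods have comparable closed neighborhoods. -/
def NC (F : DFilter S Y C) : Prop :=
  ∀ v w : S, (F.compatGraph.closedNbhd v ∩ F.compatGraph.closedNbhd w).Nonempty →
    F.compatGraph.closedNbhd v ⊆ F.compatGraph.closedNbhd w ∨
      F.compatGraph.closedNbhd w ⊆ F.compatGraph.closedNbhd v

/-- The target set of the determinism-enforcing zipper constraint generated by a
set of states `U` and an observation `y`: all `y`-children of members of `U`. -/
def zipTarget (F : DFilter S Y C) (U : Set S) (y : Y) : Set S :=
  {w | ∃ u ∈ U, F.tr u y = some w}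

/-- A set of mutually compatible states. -/
def MutuallyCompatible (F : DFilter S Y C) (U : Set S) : Prop :=
  ∀ u ∈ U, ∀ u' ∈ U, F.Compatible u u'

end DFilter

namespace DFilter

variable {S Y C : Type}

lemma nil_mem_Ext (F : DFilter S Y C) (v : S) : ([] : List Y) ∈ F.Ext v := by
  simp [Ext, run]

lemma tr_isSome_of_cons_mem_Ext (F : DFilter S Y C) {v : S} {y : Y} {rest : List Y}
    (h : (y :: rest) ∈ F.Ext v) : (F.tr v y).isSome := by
  rcases hw : F.tr v y with _ | w
  · simp [Ext, run, hw] at h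
  · simp

lemma out_eq_of_adj (F : DFilter S Y C) {a b : S} (h : F.compatGraph.Adj a b) :
    F.out a = F.out b := by
  have := h.2 [] (F.nil_mem_Ext a) (F.nil_mem_Ext b)
  simpa [outs] using this

lemma out_eq_of_reachable (F : DFilter S Y C) {a b : S}
    (h : F.compatGraph.Reachable a b) : F.out a = F.out b := by
  obtain ⟨w⟩ := h
  induction w with
  | nil => rfl
  | cons hadj _ ih => exact (F.out_eq_of_adj hadj).trans ih

lemma outs_eq_replicate (F : DFilter S Y C) (c : C) (hc : ∀ v : S, F.out v = c) :
    ∀ (s : List Y) (v : S), s ∈ F.Ext v →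
      F.outs v s = some (List.replicate (s.length + 1) c) := by
  intro s
  induction s with
  | nil => intro v _; simp [outs, hc]
  | cons y ys ih =>
    intro v hv
    rcases hw : F.tr v y with _ | w
    · exfalso; simp [Ext, run, hw] at hv
    · have hv' : ys ∈ F.Ext w := by simpa [Ext, run, hw] using hv
      simp [outs, hw, ih w hv', hc, List.replicate_succ]

end DFilter

theorem realizable_compatGraph_iff' {V : Type} [Fintype V] [Nonempty V]
    (G : SimpleGraph V) :
    (∃ (S Y C : Type) (F : DFilter S Y C), Finite S ∧ Nonempty S ∧ Finite Y ∧ Nonempty Y ∧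
        (∀ v : S, ∃ s : List Y, F.run F.init s = some v) ∧
        Nonempty (G ≃g F.compatGraph)) ↔
      ((∃ c₁ c₂ : G.ConnectedComponent, c₁ ≠ c₂) ∨ G = ⊤) := by
  classical
  constructor
  · rintro ⟨S, Y, C, F, _, _, _, _, hreach, ⟨e⟩⟩
    by_cases hc : ∃ c₁ c₂ : G.ConnectedComponent, c₁ ≠ c₂
    · exact Or.inl hc
    push_neg at hc
    right
    have hpre : G.Preconnected := fun u v =>
      (SimpleGraph.ConnectedComponent.eq).mp (hc _ _)
    obtain ⟨s₀⟩ := ‹Nonempty S›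
    have hout : ∀ v : S, F.out v = F.out s₀ := by
      intro v
      have hr : G.Reachable (e.symm v) (e.symm s₀) := hpre _ _
      have hr' : F.compatGraph.Reachable v s₀ := by
        have := hr.map e.toHom
        simpa using this
      exact F.out_eq_of_reachable hr'
    have hcompat : ∀ a b : S, F.Compatible a b := by
      intro a b s hsa hsb
      rw [F.outs_eq_replicate (F.out s₀) hout s a hsa,
        F.outs_eq_replicate (F.out s₀) hout s b hsb]
    ext u v
    simp only [SimpleGraph.top_adj]
    constructor
    · exact G.ne_of_adj
    · intro huv
      have : F.compatGraph.Adj (e u) (e v) :=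
        ⟨fun h => huv (e.injective h), hcompat _ _⟩
      exact e.map_rel_iff.mp this
  · rintro (⟨c₁, c₂, hc⟩ | htop)
    · -- disconnected case
      obtain ⟨r₁, hr₁⟩ := c₁.exists_rep
      obtain ⟨r₂, hr₂⟩ := c₂.exists_rep
      have hrr : G.connectedComponentMk r₁ ≠ G.connectedComponentMk r₂ := by
        exact fun h => hc (by rw [← hr₁, ← hr₂]; exact h)
      have hnr : ¬ G.Reachable r₁ r₂ := fun h =>
        hrr (SimpleGraph.ConnectedComponent.sound h)
      set F : DFilter V (V ⊕ (V × V)) G.ConnectedComponent :=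
        { init := Classical.arbitrary V
          tr := fun u y =>
            match y with
            | Sum.inl x => some x
            | Sum.inr (a, b) =>
                if a ≠ b ∧ ¬ G.Adj a b then
                  (if u = a then some r₁ else if u = b then some r₂ else none)
                else none
          out := fun u => G.connectedComponentMk u } with hF
      have htr_inl : ∀ u x : V, F.tr u (Sum.inl x) = some x := fun u x => rfl
      have htr_some : ∀ u a b : V, (F.tr u (Sum.inr (a, b))).isSome →
          (a ≠ b ∧ ¬ G.Adj a b) ∧ (u = a ∨ u = b) := by
        intro u a b h
        simp only [hF] at h
        by_cases h1 : a ≠ b ∧ ¬ G.Adj a b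
        · refine ⟨h1, ?_⟩
          by_cases h2 : u = a
          · exact Or.inl h2
          by_cases h3 : u = b
          · exact Or.inr h3
          · simp [h1, h2, h3] at h
        · simp [h1] at h
      -- adjacent implies compatible
      have hcadj : ∀ v w : V, G.Adj v w → F.Compatible v w := by
        intro v w hadj s hsv hsw
        have hmk : G.connectedComponentMk v = G.connectedComponentMk w :=
          SimpleGraph.ConnectedComponent.sound hadj.reachable
        match s with
        | [] => simp [DFilter.outs, hF, hmk]
        | Sum.inl x :: rest =>
          simp [DFilter.outs, htr_inl, hF, hmk]
        | Sum.inr (a, b) :: rest =>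
          exfalso
          obtain ⟨⟨hab, hnadj⟩, hvab⟩ :=
            htr_some v a b (F.tr_isSome_of_cons_mem_Ext hsv)
          obtain ⟨_, hwab⟩ := htr_some w a b (F.tr_isSome_of_cons_mem_Ext hsw)
          have hvw := G.ne_of_adj hadj
          rcases hvab with rfl | rfl <;> rcases hwab with rfl | rfl
          · exact hvw rfl
          · exact hnadj hadj
          · exact hnadj hadj.symm
          · exact hvw rfl
      -- distinct nonadjacent implies incompatible
      have hcnadj : ∀ v w : V, v ≠ w → ¬ G.Adj v w → ¬ F.Compatible v w := by
        intro v w hvw hnadj hcomp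
        have hwv : w ≠ v := Ne.symm hvw
        have hev : [Sum.inr (v, w)] ∈ F.Ext v := by
          simp [DFilter.Ext, DFilter.run, hF, hvw, hwv, hnadj]
        have hew : [Sum.inr (v, w)] ∈ F.Ext w := by
          simp [DFilter.Ext, DFilter.run, hF, hvw, hwv, hnadj]
        have h1 : F.outs v [Sum.inr (v, w)] =
            some [G.connectedComponentMk v, G.connectedComponentMk r₁] := by
          simp [DFilter.outs, hF, hvw, hwv, hnadj]
        have h2 : F.outs w [Sum.inr (v, w)] =
            some [G.connectedComponentMk w, G.connectedComponentMk r₂] := by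
          simp [DFilter.outs, hF, hvw, hwv, hnadj]
        have h3 := hcomp _ hev hew
        rw [h1, h2] at h3
        simp only [Option.some.injEq, List.cons.injEq] at h3
        exact hrr h3.2.1
      refine ⟨V, V ⊕ (V × V), G.ConnectedComponent, F, inferInstance,
        inferInstance, inferInstance, inferInstance, ?_, ⟨⟨Equiv.refl V, ?_⟩⟩⟩
      · intro v
        exact ⟨[Sum.inl v], by simp [DFilter.run, hF]⟩
      · intro u v
        simp only [Equiv.refl_apply]
        constructor
        · rintro ⟨hne, hcomp⟩
          by_contra hnadj
          exact hcnadj u v hne hnadj hcomp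
        · intro hadj
          exact ⟨G.ne_of_adj hadj, hcadj u v hadj⟩
    · -- complete case
      subst htop
      set F : DFilter V V Unit :=
        { init := Classical.arbitrary V
          tr := fun _ x => some x
          out := fun _ => () } with hF
      have hcompat : ∀ v w : V, F.Compatible v w := by
        intro v w s _ _
        match s with
        | [] => simp [DFilter.outs]
        | x :: rest => simp [DFilter.outs, hF]
      refine ⟨V, V, Unit, F, inferInstance, inferInstance, inferInstance,
        inferInstance, ?_, ⟨⟨Equiv.refl V, ?_⟩⟩⟩
      · intro v
        exact ⟨[v], by simp [DFilter.run, hF]⟩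
      · intro u v
        simp only [Equiv.refl_apply, SimpleGraph.top_adj]
        constructor
        · exact fun h => h.1
        · exact fun h => ⟨h, hcompat u v⟩


/-- A finite nonempty simple graph `G` is isomorphic to the compatibility graph of some
deterministic filter (finite nonempty state set, finite nonempty observation set, every
state reachable from the initial state) if and only if `G` has at least two connected
components or is a complete graph. -/
theorem realizable_compatGraph_iff {V : Type} [Fintype V] [Nonempty V]
    (G : SimpleGraph V) :
    (∃ (S Y C : Type) (F : DFilter S Y C), Finite S ∧ Nonempty S ∧ Finite Y ∧ Nonempty Y ∧
        (∀ v : S, ∃ s : List Y, F.run F.init s = some v) ∧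
        Nonempty (G ≃g F.compatGraph)) ↔
      ((∃ c₁ c₂ : G.ConnectedComponent, c₁ ≠ c₂) ∨ G = ⊤) := by
  exact realizable_compatGraph_iff' G
end

section
/- If F is a globally language comparable (GLC) deterministic filter and v ∼ w are compatible states with Ext(v) ⊆ Ext(w), then every state compatible with w is also compatible with v; consequently, in the compatibility graph G_F the closed neighborhoods satisfy N[w] ⊆ N[v]. In particular, any two compatible states of a GLC filter have comparable closed neighborhoods in G_F. -/
/-- In a GLC filter, if `v ∼ w` with `Ext v ⊆ Ext w`, then every state compatible with `w`
is compatible with `v`, hence `N[w] ⊆ N[v]` in the compatibility graph; in particular any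
two compatible states have comparable closed neighborhoods in the compatibility graph. -/
theorem glc_closedNbhd_comparable {S Y C : Type} (F : DFilter S Y C) (hglc : F.GLC) :
    (∀ v w : S, F.Compatible v w → F.Ext v ⊆ F.Ext w →
      (∀ u : S, F.Compatible u w → F.Compatible u v) ∧
        F.compatGraph.closedNbhd w ⊆ F.compatGraph.closedNbhd v) ∧
    (∀ v w : S, F.Compatible v w →
      F.compatGraph.closedNbhd v ⊆ F.compatGraph.closedNbhd w ∨
        F.compatGraph.closedNbhd w ⊆ F.compatGraph.closedNbhd v) := by
  have hsymm : ∀ v w : S, F.Compatible v w → F.Compatible w v :=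
    fun v w h s hw hv => (h s hv hw).symm
  have key : ∀ v w : S, F.Compatible v w → F.Ext v ⊆ F.Ext w →
      (∀ u : S, F.Compatible u w → F.Compatible u v) ∧
        F.compatGraph.closedNbhd w ⊆ F.compatGraph.closedNbhd v := by
    intro v w hvw hsub
    have hcomp : ∀ u : S, F.Compatible u w → F.Compatible u v := by
      intro u huw s hsu hsv
      have hsw : s ∈ F.Ext w := hsub hsv
      calc F.outs u s = F.outs w s := huw s hsu hsw
        _ = F.outs v s := (hvw s hsv hsw).symm
    refine ⟨hcomp, ?_⟩
    intro u hu
    rcases hu with h | h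
    · subst h
      by_cases hvu : u = v
      · exact Or.inl hvu
      · exact Or.inr ⟨fun h => hvu h.symm, hvw⟩
    · by_cases hvu : v = u
      · exact Or.inl hvu.symm
      · exact Or.inr ⟨hvu, hsymm u v (hcomp u (hsymm w u h.2))⟩
  refine ⟨key, ?_⟩
  intro v w hvw
  rcases hglc v w hvw with h | h
  · exact Or.inr ((key v w hvw h).2)
  · exact Or.inl ((key w v (hsymm v w hvw) h).2)
end

section
/- If a deterministic filter F is globally language comparable (GLC), then its compatibility graph G_F has the compatibility-preserving zipper neighborhoods (cpzn) property with respect to its determinism-enforcing zipper constraints Z_F: for every zipper constraint (U, W) ∈ Z_F whose target is a pair W = {w0, w1}, either N[w0] ⊆ N[w1] or N[w1] ⊆ N[w0] in G_F. -/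
lemma DFilter.compatible_symm {S Y C : Type} (F : DFilter S Y C) {v w : S}
    (h : F.Compatible v w) : F.Compatible w v :=
  fun s hw hv => (h s hv hw).symm

lemma DFilter.outs_isSome {S Y C : Type} (F : DFilter S Y C) :
    ∀ (s : List Y) (v : S), (F.outs v s).isSome ↔ (F.run v s).isSome := by
  intro s
  induction s with
  | nil => intro v; simp [DFilter.outs, DFilter.run]
  | cons y ys ih =>
      intro v
      simp only [DFilter.outs, DFilter.run]
      cases F.tr v y with
      | none => simp
      | some w => simpa using ih w

/-- Key step: if `a ∼ b` and `Ext b ⊆ Ext a`, then `N[a] ⊆ N[b]`. -/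
lemma DFilter.closedNbhd_subset {S Y C : Type} (F : DFilter S Y C) {a b : S}
    (hab : F.Compatible a b) (hsub : F.Ext b ⊆ F.Ext a) :
    F.compatGraph.closedNbhd a ⊆ F.compatGraph.closedNbhd b := by
  intro x hx
  have hmemb : ∀ z : S, F.Compatible b z → z ∈ F.compatGraph.closedNbhd b := by
    intro z hz
    by_cases h : z = b
    · exact Or.inl h
    · exact Or.inr ⟨fun h' => h h'.symm, hz⟩
  rcases hx with h | h
  · subst h
    exact hmemb x (F.compatible_symm hab)
  · obtain ⟨hne, hax⟩ := h
    refine hmemb x ?_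
    intro s hsb hsx
    have hsa : s ∈ F.Ext a := hsub hsb
    calc F.outs b s = F.outs a s := (hab s hsa hsb).symm
      _ = F.outs x s := hax s hsa hsx

/-- A GLC filter has the cpzn property: for every determinism-enforcing zipper constraint
whose target is a pair `{w₀, w₁}`, the closed neighborhoods of `w₀` and `w₁` in the
compatibility graph are comparable. -/
theorem glc_cpzn {S Y C : Type} (F : DFilter S Y C) (hglc : F.GLC) :
    ∀ (U : Set S) (y : Y) (w₀ w₁ : S), F.MutuallyCompatible U →
      F.zipTarget U y = {w₀, w₁} →
      F.compatGraph.closedNbhd w₀ ⊆ F.compatGraph.closedNbhd w₁ ∨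
        F.compatGraph.closedNbhd w₁ ⊆ F.compatGraph.closedNbhd w₀ := by
  intro U y w₀ w₁ hmut htar
  have h0 : w₀ ∈ F.zipTarget U y := by rw [htar]; left; rfl
  have h1 : w₁ ∈ F.zipTarget U y := by rw [htar]; right; rfl
  obtain ⟨u₀, hu₀, ht₀⟩ := h0
  obtain ⟨u₁, hu₁, ht₁⟩ := h1
  have hcu : F.Compatible u₀ u₁ := hmut u₀ hu₀ u₁ hu₁
  have hrun : ∀ (u w : S) (s : List Y), F.tr u y = some w →
      F.run u (y :: s) = F.run w s := by
    intro u w s ht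
    simp [DFilter.run, ht]
  have hcw : F.Compatible w₀ w₁ := by
    intro s hs0 hs1
    have he0 : (y :: s) ∈ F.Ext u₀ := by
      show (F.run u₀ (y :: s)).isSome
      rw [hrun u₀ w₀ s ht₀]; exact hs0
    have he1 : (y :: s) ∈ F.Ext u₁ := by
      show (F.run u₁ (y :: s)).isSome
      rw [hrun u₁ w₁ s ht₁]; exact hs1
    have heq := hcu (y :: s) he0 he1
    obtain ⟨l0, hl0⟩ := Option.isSome_iff_exists.mp ((F.outs_isSome s w₀).mpr hs0)
    obtain ⟨l1, hl1⟩ := Option.isSome_iff_exists.mp ((F.outs_isSome s w₁).mpr hs1)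
    simp [DFilter.outs, ht₀, ht₁, hl0, hl1] at heq
    rw [hl0, hl1, heq.2]
  rcases hglc w₀ w₁ hcw with hsub | hsub
  · exact Or.inr (F.closedNbhd_subset (F.compatible_symm hcw) hsub)
  · exact Or.inl (F.closedNbhd_subset hcw hsub)
end

section
/- If a deterministic filter F is neighborhood comparable (NC), then its compatibility graph G_F has the compatibility-preserving zipper neighborhoods (cpzn) property with respect to its determinism-enforcing zipper constraints Z_F: for every zipper constraint (U, W) ∈ Z_F whose target is a pair W = {w0, w1}, either N[w0] ⊆ N[w1] or N[w1] ⊆ N[w0] in G_F. -/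
lemma child_compatible {S Y C : Type} (F : DFilter S Y C) {v w v' w' : S} {y : Y}
    (h : F.Compatible v w) (hv : F.tr v y = some v') (hw : F.tr w y = some w') :
    F.Compatible v' w' := by
  intro s hs hs'
  have hv' : (y :: s) ∈ F.Ext v := by
    simp [DFilter.Ext, DFilter.run, hv] at hs ⊢; exact hs
  have hw' : (y :: s) ∈ F.Ext w := by
    simp [DFilter.Ext, DFilter.run, hw] at hs' ⊢; exact hs'
  have := h (y :: s) hv' hw'
  simp only [DFilter.outs, hv, hw, Option.bind_some] at this
  obtain ⟨a, ha⟩ := Option.isSome_iff_exists.mp hs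
  obtain ⟨b, hb⟩ := Option.isSome_iff_exists.mp hs'
  -- outs is some whenever run is some; but easier: case on outs values
  cases hov : F.outs v' s with
  | none => cases how : F.outs w' s with
    | none => rfl
    | some l => simp only [Option.bind_some, hov, how] at this; simp at this
  | some l => cases how : F.outs w' s with
    | none => simp only [Option.bind_some, hov, how] at this; simp at this
    | some l' =>
      simp only [Option.bind_some, hov, how] at this
      simp at this
      rw [this.2]

/-- A neighborhood comparable filter has the cpzn property: for every
determinism-enforcing zipper constraint whose target is a pair `{w₀, w₁}`, the closed
neighborhoods of `w₀` and `w₁` in the compatibility graph are comparable. -/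
theorem nc_cpzn {S Y C : Type} (F : DFilter S Y C) (hnc : F.NC) :
    ∀ (U : Set S) (y : Y) (w₀ w₁ : S), F.MutuallyCompatible U →
      F.zipTarget U y = {w₀, w₁} →
      F.compatGraph.closedNbhd w₀ ⊆ F.compatGraph.closedNbhd w₁ ∨
        F.compatGraph.closedNbhd w₁ ⊆ F.compatGraph.closedNbhd w₀ := by
  intro U y w₀ w₁ hmut hz
  have h0 : w₀ ∈ F.zipTarget U y := by rw [hz]; exact Or.inl rfl
  have h1 : w₁ ∈ F.zipTarget U y := by rw [hz]; exact Or.inr rfl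
  obtain ⟨u₀, hu₀, ht₀⟩ := h0
  obtain ⟨u₁, hu₁, ht₁⟩ := h1
  have hcomp : F.Compatible w₀ w₁ :=
    child_compatible F (hmut u₀ hu₀ u₁ hu₁) ht₀ ht₁
  by_cases heq : w₀ = w₁
  · left; rw [heq]
  · apply hnc
    exact ⟨w₀, Or.inl rfl, Or.inr ⟨Ne.symm heq, fun s h h' => (hcomp s h' h).symm⟩⟩
end

section
/- If a deterministic filter F has no missing edges (NME), then Ext(v) = Y* for every state v; consequently F is globally language comparable (GLC), and the compatibility relation of F is transitive, so F is also neighborhood comparable (NC). -/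
lemma DFilter.run_isSome_aux {S Y C : Type} (F : DFilter S Y C)
    (hnme : ∀ (v : S) (y : Y), (F.tr v y).isSome) :
    ∀ (s : List Y) (v : S), (F.run v s).isSome := by
  intro s
  induction s with
  | nil => intro v; simp [DFilter.run]
  | cons y ys ih =>
    intro v
    obtain ⟨w, hw⟩ := Option.isSome_iff_exists.mp (hnme v y)
    simp [DFilter.run, hw, ih w]

/-- A filter with no missing edges has `Ext v = Y*` for every state `v`; consequently it
is globally language comparable, its compatibility relation is transitive, and it is
neighborhood comparable. -/
theorem nme_glc_and_nc {S Y C : Type} (F : DFilter S Y C)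
    (hnme : ∀ (v : S) (y : Y), (F.tr v y).isSome) :
    (∀ v : S, F.Ext v = Set.univ) ∧ F.GLC ∧ Transitive F.Compatible ∧ F.NC := by
  have hext : ∀ v : S, F.Ext v = Set.univ := by
    intro v
    ext s
    simp [DFilter.Ext, F.run_isSome_aux hnme s v]
  have hmem : ∀ (v : S) (s : List Y), s ∈ F.Ext v := by
    intro v s; rw [hext v]; trivial
  have hcompEq : ∀ v w : S, F.Compatible v w → ∀ s : List Y, F.outs v s = F.outs w s :=
    fun v w h s => h s (hmem v s) (hmem w s)
  have htrans : Transitive F.Compatible := by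
    intro v w x hvw hwx s _ _
    exact (hcompEq v w hvw s).trans (hcompEq w x hwx s)
  have hsymm : ∀ v w : S, F.Compatible v w → F.Compatible w v := by
    intro v w h s hw hv; exact (h s hv hw).symm
  have hrefl : ∀ v : S, F.Compatible v v := fun v s _ _ => rfl
  -- closed neighborhood membership characterization
  have hnbhd : ∀ v x : S, x ∈ F.compatGraph.closedNbhd v ↔ F.Compatible v x := by
    intro v x
    constructor
    · rintro (rfl | ⟨_, h⟩)
      · exact hrefl x
      · exact h
    · intro h
      by_cases hx : x = v
      · exact Or.inl hx
      · exact Or.inr ⟨fun h' => hx h'.symm, h⟩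
  refine ⟨hext, ?_, htrans, ?_⟩
  · intro v w _
    left
    rw [hext v, hext w]
  · intro v w ⟨x, hxv, hxw⟩
    have hvx := (hnbhd v x).mp hxv
    have hwx := (hnbhd w x).mp hxw
    have hvw : F.Compatible v w := htrans hvx (hsymm w x hwx)
    left
    intro z hz
    exact (hnbhd w z).mpr (htrans (hsymm v w hvw) ((hnbhd v z).mp hz))
end

section
/- If a deterministic filter F is once-appearing-observation (OAO), then two distinct states v and w are compatible if and only if c(v) = c(w); consequently the compatibility relation of F is an equivalence relation and F is neighborhood comparable (NC). -/
/-- In a once-appearing-observation filter, two distinct states are compatible if and only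
if they have the same output; consequently the compatibility relation is an equivalence
relation and the filter is neighborhood comparable. -/
theorem oao_nc {S Y C : Type} (F : DFilter S Y C)
    (hoao : ∀ (y : Y) (v w : S), (F.tr v y).isSome → (F.tr w y).isSome → v = w) :
    (∀ v w : S, v ≠ w → (F.Compatible v w ↔ F.out v = F.out w)) ∧
      Equivalence F.Compatible ∧ F.NC := by

  -- Common extensions of distinct states are only the empty sequence.
  have key : ∀ v w : S, v ≠ w → ∀ s : List Y, s ∈ F.Ext v → s ∈ F.Ext w → s = [] := by
    intro v w hne s hv hw
    cases s with
    | nil => rfl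
    | cons y ys =>
      exfalso
      apply hne
      refine hoao y v w ?_ ?_
      · have h := hv
        simp only [DFilter.Ext, DFilter.run, Set.mem_setOf_eq] at h
        cases hvy : F.tr v y with
        | none => rw [hvy] at h; simp at h
        | some _ => simp [hvy]
      · have h := hw
        simp only [DFilter.Ext, DFilter.run, Set.mem_setOf_eq] at h
        cases hwy : F.tr w y with
        | none => rw [hwy] at h; simp at h
        | some _ => simp [hwy]
  have hnil : ∀ v : S, ([] : List Y) ∈ F.Ext v := by
    intro v; simp [DFilter.Ext, DFilter.run]
  have hiff : ∀ v w : S, v ≠ w → (F.Compatible v w ↔ F.out v = F.out w) := by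
    intro v w hne
    constructor
    · intro hc
      have h := hc [] (hnil v) (hnil w)
      simp only [DFilter.outs, Option.some.injEq, List.cons.injEq] at h
      exact h.1
    · intro hout s hv hw
      have := key v w hne s hv hw
      subst this
      simp [DFilter.outs, hout]
  have hrefl : ∀ v : S, F.Compatible v v := fun v s _ _ => rfl
  have hsymm : ∀ {v w : S}, F.Compatible v w → F.Compatible w v :=
    fun h s hw hv => (h s hv hw).symm
  refine ⟨hiff, ⟨hrefl, hsymm, ?_⟩, ?_⟩
  · intro v w u hvw hwu
    by_cases hvu : v = u
    · subst hvu; exact hrefl v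
    by_cases hvw' : v = w
    · subst hvw'; exact hwu
    by_cases hwu' : w = u
    · subst hwu'; exact hvw
    exact (hiff v u hvu).mpr (((hiff v w hvw').mp hvw).trans ((hiff w u hwu').mp hwu))
  · -- NC
    have hnbhd : ∀ v w : S, w ∈ F.compatGraph.closedNbhd v ↔ F.out v = F.out w := by
      intro v w
      constructor
      · rintro (rfl | ⟨hne, hc⟩)
        · rfl
        · exact (hiff v w hne).mp hc
      · intro hout
        by_cases h : w = v
        · exact Or.inl h
        · exact Or.inr ⟨fun hh => h hh.symm, (hiff v w (fun hh => h hh.symm)).mpr hout⟩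
    intro v w ⟨x, hxv, hxw⟩
    left
    intro z hz
    rw [hnbhd] at hz hxv hxw ⊢
    exact hxw.trans (hxv.symm.trans hz)
end

section
/- In a once-appearing-observation (OAO) deterministic filter, any two distinct states v and w that each have at least one defined outgoing transition satisfy Ext(v) ⊄ Ext(w) and Ext(w) ⊄ Ext(v); hence any OAO filter containing two distinct compatible states, each with at least one defined outgoing transition, is not globally language comparable (GLC). -/
/-- In a once-appearing-observation filter, any two distinct states each having at least
one defined outgoing transition have incomparable extension sets; hence an OAO filter
containing two distinct compatible states, each with a defined outgoing transition, is not
globally language comparable. -/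
theorem oao_not_glc {S Y C : Type} (F : DFilter S Y C)
    (hoao : ∀ (y : Y) (v w : S), (F.tr v y).isSome → (F.tr w y).isSome → v = w) :
    (∀ v w : S, v ≠ w → (∃ y : Y, (F.tr v y).isSome) → (∃ y : Y, (F.tr w y).isSome) →
      ¬ F.Ext v ⊆ F.Ext w ∧ ¬ F.Ext w ⊆ F.Ext v) ∧
    ((∃ v w : S, v ≠ w ∧ F.Compatible v w ∧
        (∃ y : Y, (F.tr v y).isSome) ∧ (∃ y : Y, (F.tr w y).isSome)) → ¬ F.GLC) := by
  have key : ∀ v w : S, v ≠ w → (∃ y : Y, (F.tr v y).isSome) → (∃ y : Y, (F.tr w y).isSome) →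
      ¬ F.Ext v ⊆ F.Ext w := by
    rintro v w hne ⟨yv, hyv⟩ _ hsub
    have hmem : [yv] ∈ F.Ext v := by
      simp [DFilter.Ext, DFilter.run]
      rcases Option.isSome_iff_exists.mp hyv with ⟨u, hu⟩
      simp [hu, DFilter.run]
    have hmem' := hsub hmem
    simp only [DFilter.Ext, Set.mem_setOf_eq, DFilter.run] at hmem'
    have : (F.tr w yv).isSome := by
      cases h : F.tr w yv with
      | none => simp [h] at hmem'
      | some u => simp
    exact hne (hoao yv v w hyv this)
  refine ⟨fun v w hne hv hw => ⟨key v w hne hv hw, key w v hne.symm hw hv⟩, ?_⟩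
  rintro ⟨v, w, hne, hc, hv, hw⟩ hglc
  rcases hglc v w hc with h | h
  · exact key v w hne hv hw h
  · exact key w v hne.symm hw hv h
end

section
/- There exists a unitary deterministic filter whose compatibility relation is not transitive, and which is therefore not neighborhood comparable (NC). Concretely, the 5-state chain filter with states v0, v1, v2, v3, v4, a single observation a, transitions τ(v_i, a) = v_{i+1} for i = 0, 1, 2, 3 (and τ(v4, a) undefined), and outputs c(v0) = c(v2) = c(v4), c(v1) ≠ c(v3), satisfies v0 ∼ v4 and v4 ∼ v2 but v0 ≁ v2. -/
/-- There exists a unitary deterministic filter (finite nonempty state set, all states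
reachable) whose compatibility relation is not transitive, hence which is not neighborhood
comparable. Concretely, the 5-state chain filter with transitions `vᵢ ↦ vᵢ₊₁` (i < 4) on a
single observation and outputs `c v0 = c v2 = c v4`, `c v1 ≠ c v3`, satisfies
`v0 ∼ v4`, `v4 ∼ v2` but `v0 ≁ v2`, and is not NC. -/
theorem unitary_not_nc :
    (∃ (S Y C : Type) (F : DFilter S Y C), Finite S ∧ Nonempty S ∧
        (∃ y : Y, ∀ y' : Y, y' = y) ∧
        (∀ v : S, ∃ s : List Y, F.run F.init s = some v) ∧
        ¬ Transitive F.Compatible ∧ ¬ F.NC) ∧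
    (∀ (C : Type) (c : Fin 5 → C), c 0 = c 2 → c 2 = c 4 → c 1 ≠ c 3 →
      ∀ F : DFilter (Fin 5) Unit C, F.init = 0 → F.out = c →
        F.tr = (fun v _ => if v.val < 4 then some (v + 1) else none) →
        F.Compatible 0 4 ∧ F.Compatible 4 2 ∧ ¬ F.Compatible 0 2 ∧ ¬ F.NC) := by
  have key : ∀ (C : Type) (c : Fin 5 → C), c 0 = c 2 → c 2 = c 4 → c 1 ≠ c 3 →
      ∀ F : DFilter (Fin 5) Unit C, F.init = 0 → F.out = c →
        F.tr = (fun v _ => if v.val < 4 then some (v + 1) else none) →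
        F.Compatible 0 4 ∧ F.Compatible 4 2 ∧ ¬ F.Compatible 0 2 ∧ ¬ F.NC := by
    intro C c h02 h24 h13 F hinit hout htr
    obtain ⟨init, tr, out⟩ := F
    simp only at hinit hout htr
    subst hinit hout htr
    set F : DFilter (Fin 5) Unit C :=
      ⟨0, fun v _ => if v.val < 4 then some (v + 1) else none, out⟩ with hF
    have hdead : ∀ (t : List Unit), F.run 4 (() :: t) = none := fun t => rfl
    have h04c : F.Compatible 0 4 := by
      intro s hs0 hs4
      cases s with
      | nil =>
        show some [out 0] = some [out 4]
        rw [h02.trans h24]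
      | cons y t =>
        exfalso
        have := hdead t
        cases y
        simp [DFilter.Ext, this] at hs4
    have h42c : F.Compatible 4 2 := by
      intro s hs4 hs2
      cases s with
      | nil =>
        show some [out 4] = some [out 2]
        rw [h24]
      | cons y t =>
        exfalso
        have := hdead t
        cases y
        simp [DFilter.Ext, this] at hs4
    have h02c : ¬ F.Compatible 0 2 := by
      intro h
      have e1 : ([(), ()] : List Unit) ∈ F.Ext 0 := rfl
      have e2 : ([(), ()] : List Unit) ∈ F.Ext 2 := rfl
      have := h [(), ()] e1 e2
      have ho1 : F.outs 0 [(), ()] = some [out 0, out 1, out 2] := rfl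
      have ho2 : F.outs 2 [(), ()] = some [out 2, out 3, out 4] := rfl
      rw [ho1, ho2] at this
      simp only [Option.some.injEq, List.cons.injEq] at this
      exact h13 this.2.1
    refine ⟨h04c, h42c, h02c, ?_⟩
    intro hNC
    have h24c : F.Compatible 2 4 := fun s hs hs' => (h42c s hs' hs).symm
    have h4in : (4 : Fin 5) ∈ F.compatGraph.closedNbhd 0 ∩ F.compatGraph.closedNbhd 2 := by
      constructor
      · exact Or.inr ⟨(by decide : (0:Fin 5) ≠ 4), h04c⟩
      · exact Or.inr ⟨(by decide : (2:Fin 5) ≠ 4), h24c⟩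
    rcases hNC 0 2 ⟨4, h4in⟩ with hsub | hsub
    · have : (0 : Fin 5) ∈ F.compatGraph.closedNbhd 2 := hsub (Or.inl rfl)
      rcases this with h | h
      · exact absurd h (by decide)
      · exact h02c fun s hs hs' => (h.2 s hs' hs).symm
    · have : (2 : Fin 5) ∈ F.compatGraph.closedNbhd 0 := hsub (Or.inl rfl)
      rcases this with h | h
      · exact absurd h (by decide)
      · exact h02c h.2
  refine ⟨?_, key⟩
  set c : Fin 5 → Bool := fun v => decide (v = 1) with hc
  set F : DFilter (Fin 5) Unit Bool :=
    ⟨0, fun v _ => if v.val < 4 then some (v + 1) else none, c⟩ with hF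
  obtain ⟨h04, h42, hn02, hnNC⟩ :=
    key Bool c (by decide) (by decide) (by decide) F rfl rfl rfl
  refine ⟨Fin 5, Unit, Bool, F, inferInstance, ⟨0⟩, ⟨(), fun y => rfl⟩, ?_, ?_, hnNC⟩
  · intro v
    refine ⟨List.replicate v.val (), ?_⟩
    fin_cases v <;> decide
  · intro ht
    exact hn02 (ht h04 h42)
end
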